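/- Let n ≥ 1 be an integer, a < c < b reals, and X_1,…,X_n ∈ [a,b]. Let p ∈ [0,1] satisfy (1/n)·|{i : X_i ≤ c}| ≤ p. Then the population variance V = (1/n) Σ_{i=1}^n (X_i − X̄)², where X̄ = (1/n) Σ_{i=1}^n X_i, satisfies V ≤ p·(c−a)²/4 + (b−c)²/4 + p·(b−a)². -/

import Mathlib

open Finset
open scoped BigOperators

theorem stmt_5
    (n : ℕ) (hn : 1 ≤ n) (a c b : ℝ) (hac : a < c) (hcb : c < b)
    (X : Fin n → ℝ) (hX : ∀ i, X i ∈ Set.Icc a b)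
    (p : ℝ) (hp : p ∈ Set.Icc (0 : ℝ) 1)
    (hfrac : ((Finset.univ.filter (fun i => X i ≤ c)).card : ℝ) / (n : ℝ) ≤ p) :
    (∑ i, (X i - (∑ j, X j) / (n : ℝ)) ^ 2) / (n : ℝ) ≤
      p * (c - a) ^ 2 / 4 + (b - c) ^ 2 / 4 + p * (b - a) ^ 2 := by
  obtain ⟨hp0, hp1⟩ := hp
  have hn0 : (0:ℝ) < (n:ℝ) := by exact_mod_cast Nat.lt_of_lt_of_le Nat.zero_lt_one hn
  have hnne : (n:ℝ) ≠ 0 := ne_of_gt hn0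
  set μ : ℝ := (∑ j, X j) / (n:ℝ) with hμ
  set m : ℝ := (c + b) / 2 with hm
  have hsum0 : ∑ i, (X i - μ) = 0 := by
    rw [Finset.sum_sub_distrib, Finset.sum_const, Finset.card_univ, Fintype.card_fin]
    rw [hμ, nsmul_eq_mul]
    rw [mul_div_cancel₀ _ hnne, sub_self]
  have key : ∑ i, (X i - μ)^2 ≤ ∑ i, (X i - m)^2 := by
    have expand : ∑ i, (X i - m)^2
        = ∑ i, (X i - μ)^2 + 2*(μ - m) * ∑ i, (X i - μ) + (n:ℝ)*(μ - m)^2 := by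
      rw [Finset.mul_sum, ← Finset.sum_add_distrib]
      have hc : ∑ (_ : Fin n), (μ - m)^2 = (n:ℝ)*(μ - m)^2 := by
        rw [Finset.sum_const, Finset.card_univ, Fintype.card_fin, nsmul_eq_mul]
      rw [← hc, ← Finset.sum_add_distrib]
      exact Finset.sum_congr rfl (fun i _ => by ring)
    rw [expand, hsum0]
    nlinarith [sq_nonneg (μ - m)]
  set S := Finset.univ.filter (fun i => X i ≤ c) with hS
  set T := Finset.univ.filter (fun i => ¬ X i ≤ c) with hT
  have hsplit : ∑ i, (X i - m)^2 = ∑ i ∈ S, (X i - m)^2 + ∑ i ∈ T, (X i - m)^2 :=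
    (Finset.sum_filter_add_sum_filter_not Finset.univ _ _).symm
  have hSb : ∑ i ∈ S, (X i - m)^2 ≤ (S.card : ℝ) * (b-a)^2 := by
    rw [← nsmul_eq_mul]
    apply Finset.sum_le_card_nsmul
    intro i hi
    rw [hS, Finset.mem_filter] at hi
    obtain ⟨hXa, hXb⟩ := hX i
    nlinarith [hi.2]
  have hTb : ∑ i ∈ T, (X i - m)^2 ≤ (T.card : ℝ) * ((b-c)/2)^2 := by
    rw [← nsmul_eq_mul]
    apply Finset.sum_le_card_nsmul
    intro i hi
    rw [hT, Finset.mem_filter] at hi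
    obtain ⟨hXa, hXb⟩ := hX i
    have : c < X i := lt_of_not_ge hi.2
    nlinarith
  have hTn : (T.card : ℝ) ≤ (n:ℝ) := by
    exact_mod_cast (Finset.card_le_card (Finset.filter_subset _ _)).trans
      (le_of_eq (by simp))
  have hScard : (S.card : ℝ) ≤ p * n := by
    rw [div_le_iff₀ hn0] at hfrac; exact hfrac
  have hS2 : (S.card:ℝ) * (b-a)^2 ≤ p * n * (b-a)^2 :=
    mul_le_mul_of_nonneg_right hScard (sq_nonneg _)
  have hT2 : (T.card:ℝ) * ((b-c)/2)^2 ≤ (n:ℝ) * ((b-c)/2)^2 :=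
    mul_le_mul_of_nonneg_right hTn (sq_nonneg _)
  rw [div_le_iff₀ hn0]
  have hca : 0 ≤ p * (c-a)^2 := mul_nonneg hp0 (sq_nonneg _)
  nlinarith [key, hsplit, hSb, hTb, hS2, hT2, hca, mul_nonneg hca (le_of_lt hn0)]
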